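/- From the two inequalities |b−a|·m^r ≤ K₁ and |d−c|·M^r ≥ δ with 1 < m ≤ M, K₁ > 0, δ > 0, r ≥ 0 real, one deduces |b−a| ≤ (K₁/δ)·(M/m)^{(ln K₁ − ln|b−a|)/ln m}·|d−c|, and consequently |b−a| ≤ C·|d−c|^α where α = 1/(1 + ln(M/m)/ln m) and C depends only on K₁, δ, m, M. -/

import Mathlib

/-- From `|b−a|·m^r ≤ K₁` and `|d−c|·M^r ≥ δ` (with `1 < m ≤ M`, `K₁, δ > 0`, `r ≥ 0`) one
deduces `|b−a| ≤ (K₁/δ)·(M/m)^((ln K₁ − ln|b−a|)/ln m)·|d−c|`, and consequently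
`|b−a| ≤ C·|d−c|^α` with `α = 1/(1 + ln(M/m)/ln m)` and `C` depending only on
`K₁, δ, m, M`.  Here `x` stands for `|b−a|` and `y` for `|d−c|`. -/
theorem holder_bound_from_expansion_inequalities
    (m M K₁ δ : ℝ) (hm : 1 < m) (hmM : m ≤ M) (hK₁ : 0 < K₁) (hδ : 0 < δ) :
    ∃ C > 0, ∀ x y r : ℝ, 0 < x → 0 < y → x ≤ K₁ → 0 ≤ r →
      x * m ^ r ≤ K₁ → δ ≤ y * M ^ r →
      x ≤ K₁ / δ * (M / m) ^ ((Real.log K₁ - Real.log x) / Real.log m) * y ∧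
      x ≤ C * y ^ (1 / (1 + Real.log (M / m) / Real.log m)) := by
  have hm0 : (0:ℝ) < m := lt_trans one_pos hm
  have hM1 : (1:ℝ) < M := lt_of_lt_of_le hm hmM
  have hM0 : (0:ℝ) < M := lt_trans one_pos hM1
  have hlm : 0 < Real.log m := Real.log_pos hm
  have hlM : 0 < Real.log M := Real.log_pos hM1
  set α := Real.log m / Real.log M with hαdef
  have hα0 : 0 ≤ α := le_of_lt (div_pos hlm hlM)
  have hA : 1 / (1 + Real.log (M / m) / Real.log m) = α := by
    rw [Real.log_div (ne_of_gt hM0) (ne_of_gt hm0)]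
    field_simp [hαdef]
    rw [hαdef]
    congr 1
    ring
  have hδα : 0 < δ ^ α := Real.rpow_pos_of_pos hδ α
  refine ⟨K₁ / δ ^ α, div_pos hK₁ hδα, ?_⟩
  intro x y r hx hy hxK hr hxm hyM
  have hmr : (0:ℝ) < m ^ r := Real.rpow_pos_of_pos hm0 r
  have hMr : (0:ℝ) < M ^ r := Real.rpow_pos_of_pos hM0 r
  have h1 : x ≤ K₁ / m ^ r := (le_div_iff₀ hmr).2 hxm
  have h2 : δ / M ^ r ≤ y := (div_le_iff₀ hMr).2 (by linarith [mul_comm y (M ^ r)])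
  set t := (Real.log K₁ - Real.log x) / Real.log m with htdef
  have hrt : r ≤ t := by
    have hmx : m ^ r ≤ K₁ / x := (le_div_iff₀ hx).2 (by linarith [mul_comm (m ^ r) x])
    have := Real.log_le_log hmr hmx
    rw [Real.log_rpow hm0, Real.log_div (ne_of_gt hK₁) (ne_of_gt hx)] at this
    exact (le_div_iff₀ hlm).2 this
  have hMm1 : (1:ℝ) ≤ M / m := (one_le_div hm0).2 hmM
  have hMm0 : (0:ℝ) < M / m := div_pos hM0 hm0
  have hpow : (M / m) ^ r ≤ (M / m) ^ t := Real.rpow_le_rpow_of_exponent_le hMm1 hrt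
  constructor
  · have heq : K₁ / δ * (M / m) ^ r * (δ / M ^ r) = K₁ / m ^ r := by
      rw [Real.div_rpow (le_of_lt hM0) (le_of_lt hm0)]
      field_simp
    calc x ≤ K₁ / m ^ r := h1
      _ = K₁ / δ * (M / m) ^ r * (δ / M ^ r) := heq.symm
      _ ≤ K₁ / δ * (M / m) ^ t * (δ / M ^ r) := by
          apply mul_le_mul_of_nonneg_right _ (le_of_lt (div_pos hδ hMr))
          exact mul_le_mul_of_nonneg_left hpow (le_of_lt (div_pos hK₁ hδ))
      _ ≤ K₁ / δ * (M / m) ^ t * y := by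
          apply mul_le_mul_of_nonneg_left h2
          positivity
  · rw [hA]
    have hαM : α * Real.log M = Real.log m := div_mul_cancel₀ _ (ne_of_gt hlM)
    have hMrα : (M ^ r) ^ α = m ^ r := by
      rw [← Real.rpow_mul (le_of_lt hM0), Real.rpow_def_of_pos hM0,
        Real.rpow_def_of_pos hm0]
      congr 1
      rw [mul_comm r α, ← mul_assoc, mul_comm (Real.log M), hαM]
    have hyα : (δ / M ^ r) ^ α ≤ y ^ α :=
      Real.rpow_le_rpow (le_of_lt (div_pos hδ hMr)) h2 hα0
    have hδMα : (δ / M ^ r) ^ α = δ ^ α / m ^ r := by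
      rw [Real.div_rpow (le_of_lt hδ) (le_of_lt hMr), hMrα]
    calc x ≤ K₁ / m ^ r := h1
      _ = K₁ / δ ^ α * (δ ^ α / m ^ r) := by field_simp
      _ = K₁ / δ ^ α * (δ / M ^ r) ^ α := by rw [hδMα]
      _ ≤ K₁ / δ ^ α * y ^ α := by
          exact mul_le_mul_of_nonneg_left hyα (le_of_lt (div_pos hK₁ hδα))
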